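/- Let φ be a ring automorphism of an abelian von Neumann algebra's measurable operator algebra L⁰(Ω,Σ,μ) (complex-valued measurable functions mod null) that is continuous in the topology of local convergence in measure. Then φ maps L^∞(Ω,Σ,μ) into L^∞(Ω,Σ,μ), and ‖φ(x)‖_∞ = ‖x‖_∞ for all x ∈ L^∞. -/

import Mathlib

open MeasureTheory Filter

open ENNReal

section Aux

variable {Ω : Type*} [MeasurableSpace Ω] {μ : Measure Ω}

private lemma aux_ae_le_eLpNorm (f : Ω → ℂ) :
    ∀ᵐ ω ∂μ, (‖f ω‖₊ : ℝ≥0∞) ≤ eLpNorm f ⊤ μ := by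
  rw [eLpNorm_exponent_top]; exact ae_le_eLpNormEssSup

private lemma aux_eLpNorm_le {f : Ω → ℂ} {C : ℝ≥0∞}
    (h : ∀ᵐ ω ∂μ, (‖f ω‖₊ : ℝ≥0∞) ≤ C) : eLpNorm f ⊤ μ ≤ C := by
  rw [eLpNorm_exponent_top]; exact essSup_le_of_ae_le _ h

/-- If the powers of `z` tend to `0` in measure, then `‖z‖ ≤ 1` a.e. -/
private lemma aux_ae_le_one_of_pow_tendsto (z : Ω →ₘ[μ] ℂ)
    (h : TendstoInMeasure μ (fun n => ⇑(z ^ n)) atTop ⇑(0 : Ω →ₘ[μ] ℂ)) :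
    ∀ᵐ ω ∂μ, ‖z ω‖ ≤ 1 := by
  rw [ae_iff]
  set T : Set Ω := {ω | ¬ ‖z ω‖ ≤ 1} with hT
  set E : Set Ω := {ω | (∀ n : ℕ, (z ^ n) ω = (z ω) ^ n) ∧ (0 : Ω →ₘ[μ] ℂ) ω = 0} with hEdef
  have hE : μ Eᶜ = 0 := by
    have hae : ∀ᵐ ω ∂μ, ω ∈ E := by
      refine ((ae_all_iff.2 fun n => ?_).and (AEEqFun.coeFn_zero (β := ℂ))).mono fun ω hω => hω
      filter_upwards [AEEqFun.coeFn_pow z n] with ω hω using hω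
    exact hae
  have hTE : μ (T ∩ E) = μ T := measure_inter_conull hE
  have hsub : ∀ n : ℕ, T ∩ E ⊆ {ω | (1:ℝ) ≤ dist ((z ^ n) ω) ((0 : Ω →ₘ[μ] ℂ) ω)} := by
    intro n ω ⟨hωT, hωE⟩
    have h1 : (1:ℝ) ≤ ‖z ω‖ := le_of_not_ge hωT
    simp only [Set.mem_setOf_eq, hωE.1 n, hωE.2, dist_zero_right, norm_pow]
    exact one_le_pow₀ h1
  have hsub' : ∀ n : ℕ, μ T ≤ μ {ω | (1:ℝ≥0∞) ≤ edist ((z ^ n) ω) ((0 : Ω →ₘ[μ] ℂ) ω)} :=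
    fun n => hTE ▸ measure_mono (fun ω hω => by
      have h := hsub n hω
      simp only [Set.mem_setOf_eq] at h ⊢
      rw [edist_dist]; exact ENNReal.one_le_ofReal.2 h)
  have := ge_of_tendsto' (h 1 one_pos) hsub'
  exact le_antisymm this zero_le

end Aux

section Aux2

set_option linter.unusedSectionVars false

variable {Ω : Type*} [MeasurableSpace Ω] {μ : Measure Ω} [IsFiniteMeasure μ]

/-- If `‖y‖ < 1` a.e., the powers of `y` tend to `0` in measure. -/
private lemma aux_pow_tendsto (y : Ω →ₘ[μ] ℂ) (hy : ∀ᵐ ω ∂μ, ‖y ω‖ < 1) :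
    TendstoInMeasure μ (fun n => ⇑(y ^ n)) atTop ⇑(0 : Ω →ₘ[μ] ℂ) := by
  refine tendstoInMeasure_of_tendsto_ae (fun n => (y ^ n).aestronglyMeasurable) ?_
  have hpow : ∀ᵐ ω ∂μ, ∀ n : ℕ, (y ^ n) ω = (y ω) ^ n := by
    refine ae_all_iff.2 fun n => ?_
    filter_upwards [AEEqFun.coeFn_pow y n] with ω hω using hω
  filter_upwards [hpow, AEEqFun.coeFn_zero (β := ℂ), hy] with ω h1 h2 h3
  rw [h2]
  exact (tendsto_pow_atTop_nhds_zero_of_norm_lt_one h3).congr fun n => (h1 n).symm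

variable (φ : (Ω →ₘ[μ] ℂ) ≃ (Ω →ₘ[μ] ℂ))
    (hadd : ∀ x y : Ω →ₘ[μ] ℂ, φ (x + y) = φ x + φ y)
    (hmul : ∀ x y : Ω →ₘ[μ] ℂ, φ (x * y) = φ x * φ y)
    (hone : φ 1 = 1)

include hadd in
private lemma aux_zero : φ 0 = 0 := by
  have h := hadd 0 0
  rw [add_zero] at h
  have : φ 0 + φ 0 = φ 0 + 0 := by rw [add_zero]; exact h.symm
  exact add_left_cancel this

include hmul hone in
private lemma aux_pow (x : Ω →ₘ[μ] ℂ) (n : ℕ) : φ (x ^ n) = (φ x) ^ n := by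
  induction n with
  | zero => simpa using hone
  | succ n ih => rw [pow_succ, hmul, ih, pow_succ]

include hadd in
private lemma aux_nsmul (x : Ω →ₘ[μ] ℂ) (n : ℕ) : φ ((n : ℂ) • x) = (n : ℂ) • φ x := by
  induction n with
  | zero =>
      have e1 : ((0:ℕ):ℂ) • x = 0 := by rw [Nat.cast_zero]; exact zero_smul ℂ x
      have e2 : ((0:ℕ):ℂ) • φ x = 0 := by rw [Nat.cast_zero]; exact zero_smul ℂ (φ x)
      rw [e1, e2]; exact aux_zero φ hadd
  | succ n ih =>
      have e : ∀ z : Ω →ₘ[μ] ℂ, (((n+1:ℕ)) : ℂ) • z = (n : ℂ) • z + z := by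
        intro z
        have h := add_smul (M := Ω →ₘ[μ] ℂ) (n:ℂ) 1 z
        rw [one_smul] at h
        rw [Nat.cast_add, Nat.cast_one]
        exact h
      rw [e x, hadd, ih, e (φ x)]

include hadd in
private lemma aux_neg (x : Ω →ₘ[μ] ℂ) : φ (-x) = -(φ x) := by
  have h := hadd x (-x)
  rw [add_neg_cancel, aux_zero φ hadd] at h
  exact eq_neg_of_add_eq_zero_right h.symm

include hadd in
private lemma aux_zsmul (x : Ω →ₘ[μ] ℂ) (m : ℤ) : φ ((m : ℂ) • x) = (m : ℂ) • φ x := by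
  obtain ⟨n, rfl | rfl⟩ := m.eq_nat_or_neg
  · push_cast
    exact aux_nsmul φ hadd x n
  · push_cast
    have e : ∀ z : Ω →ₘ[μ] ℂ, (-(n:ℂ)) • z = -((n : ℂ) • z) := fun z => neg_smul _ z
    rw [e x, aux_neg φ hadd, aux_nsmul φ hadd, ← e (φ x)]

include hadd in
private lemma aux_qsmul (x : Ω →ₘ[μ] ℂ) (q : ℚ) : φ ((q : ℂ) • x) = (q : ℂ) • φ x := by
  have hden : ((q.den : ℂ)) ≠ 0 := Nat.cast_ne_zero.2 q.den_nz
  have hdc : (q.den : ℂ) * (q : ℂ) = (q.num : ℂ) := by rw [Rat.cast_def]; field_simp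
  have hsm : ∀ z : Ω →ₘ[μ] ℂ, (q.den : ℂ) • ((q : ℂ) • z) = (q.num : ℂ) • z := by
    intro z
    exact (smul_smul (q.den : ℂ) (q : ℂ) z).trans (by rw [hdc])
  have key : (q.den : ℂ) • φ ((q : ℂ) • x) = (q.den : ℂ) • ((q : ℂ) • φ x) := by
    calc (q.den : ℂ) • φ ((q : ℂ) • x)
        = φ ((q.den : ℂ) • ((q : ℂ) • x)) := (aux_nsmul φ hadd _ _).symm
      _ = φ ((q.num : ℂ) • x) := by rw [hsm x]
      _ = (q.num : ℂ) • φ x := aux_zsmul φ hadd x q.num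
      _ = (q.den : ℂ) • ((q : ℂ) • φ x) := (hsm (φ x)).symm
  have h2 := congrArg (fun z => (q.den : ℂ)⁻¹ • z) key
  simpa only [inv_smul_smul₀ hden] using h2

include hadd hmul hone in
/-- Main inequality: `φ` does not increase the `L^∞` norm. -/
private lemma aux_norm_le
    (hcont : ∀ (f : ℕ → Ω →ₘ[μ] ℂ) (g : Ω →ₘ[μ] ℂ),
      TendstoInMeasure μ (fun n => ⇑(f n)) atTop ⇑g →
      TendstoInMeasure μ (fun n => ⇑(φ (f n))) atTop ⇑(φ g))
    (x : Ω →ₘ[μ] ℂ) : eLpNorm (⇑(φ x)) ⊤ μ ≤ eLpNorm (⇑x) ⊤ μ := by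
  set N := eLpNorm (⇑x) ⊤ μ with hN
  rcases eq_or_ne N ⊤ with hT | hT
  · rw [hT]; exact le_top
  have hstep : ∀ q : ℚ, N < ENNReal.ofReal q → eLpNorm (⇑(φ x)) ⊤ μ ≤ ENNReal.ofReal q := by
    intro q hq
    have hq0 : (0:ℝ) < (q:ℝ) := by
      by_contra hc
      rw [ENNReal.ofReal_eq_zero.2 (le_of_not_gt hc)] at hq
      exact (not_lt_of_ge (zero_le : 0 ≤ N)) hq
    have hqC : ((q:ℝ) : ℂ) ≠ 0 := by
      simp only [ne_eq, Complex.ofReal_eq_zero]; exact ne_of_gt hq0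
    have hxb : ∀ᵐ ω ∂μ, ‖x ω‖ < (q:ℝ) := by
      filter_upwards [aux_ae_le_eLpNorm (μ := μ) (⇑x)] with ω hω
      have h1 : ENNReal.ofReal ‖x ω‖ < ENNReal.ofReal (q:ℝ) := by
        rw [ofReal_norm]
        exact lt_of_le_of_lt hω hq
      exact (ENNReal.ofReal_lt_ofReal_iff hq0).1 h1
    set y : Ω →ₘ[μ] ℂ := (((q:ℝ)) : ℂ)⁻¹ • x with hy
    have hylt : ∀ᵐ ω ∂μ, ‖y ω‖ < 1 := by
      filter_upwards [AEEqFun.coeFn_smul ((((q:ℝ)) : ℂ)⁻¹) x, hxb] with ω h1 h2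
      rw [h1]
      simp only [Pi.smul_apply, norm_smul, norm_inv]
      rw [Complex.norm_real, Real.norm_eq_abs, abs_of_pos hq0]
      calc (q:ℝ)⁻¹ * ‖x ω‖ < (q:ℝ)⁻¹ * (q:ℝ) :=
            mul_lt_mul_of_pos_left h2 (inv_pos.2 hq0)
        _ = 1 := inv_mul_cancel₀ (ne_of_gt hq0)
    have htend := hcont (fun n => y ^ n) 0 (aux_pow_tendsto y hylt)
    have htend' : TendstoInMeasure μ (fun n => ⇑((φ y) ^ n)) atTop ⇑(0 : Ω →ₘ[μ] ℂ) := by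
      have e1 : (fun n : ℕ => ⇑(φ (y ^ n))) = fun n : ℕ => ⇑((φ y) ^ n) := by
        funext n; rw [aux_pow φ hmul hone]
      rwa [e1, aux_zero φ hadd] at htend
    have hφy : ∀ᵐ ω ∂μ, ‖(φ y) ω‖ ≤ 1 := aux_ae_le_one_of_pow_tendsto (φ y) htend'
    have hxy : φ x = (((q:ℝ)) : ℂ) • φ y := by
      have h1 : x = (((q:ℝ)) : ℂ) • y := (smul_inv_smul₀ hqC x).symm
      have h2 : ((((q:ℝ)) : ℂ)) = ((q : ℚ) : ℂ) := by push_cast; ring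
      conv_lhs => rw [h1]
      rw [h2]
      exact aux_qsmul φ hadd y q
    refine aux_eLpNorm_le ?_
    filter_upwards [AEEqFun.coeFn_smul ((((q:ℝ)) : ℂ)) (φ y), hφy] with ω h1 h2
    have h3 : ‖(φ x) ω‖ ≤ (q:ℝ) := by
      rw [hxy, h1]
      rw [Pi.smul_apply, norm_smul, Complex.norm_real, Real.norm_eq_abs, abs_of_pos hq0]
      calc (q:ℝ) * ‖(φ y) ω‖ ≤ (q:ℝ) * 1 := mul_le_mul_of_nonneg_left h2 (le_of_lt hq0)
        _ = (q:ℝ) := mul_one _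
    rw [← enorm_eq_nnnorm, ← ofReal_norm]
    exact ENNReal.ofReal_le_ofReal h3
  by_contra hlt
  push_neg at hlt
  obtain ⟨q, _, h1, h2⟩ := ENNReal.lt_iff_exists_rat_btwn.1 hlt
  have hrfl : ((Real.toNNReal (q:ℝ)) : ℝ≥0∞) = ENNReal.ofReal (q:ℝ) := rfl
  rw [hrfl] at h1 h2
  exact absurd (hstep q h1) (not_le_of_gt h2)

end Aux2


/-- Let `φ` be a ring automorphism of `L⁰(Ω, Σ, μ)` (complex measurable
functions modulo null sets) which is (sequentially) continuous for the topology of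
convergence in measure.  Then `φ` maps `L^∞` into `L^∞` and preserves the essential
supremum norm: `‖φ x‖_∞ = ‖x‖_∞` for every `x ∈ L^∞`. -/
theorem measure_continuous_automorphism_preserves_Linfty
    {Ω : Type*} [MeasurableSpace Ω] (μ : Measure Ω) [IsFiniteMeasure μ]
    (φ : (Ω →ₘ[μ] ℂ) ≃ (Ω →ₘ[μ] ℂ))
    (hadd : ∀ x y : Ω →ₘ[μ] ℂ, φ (x + y) = φ x + φ y)
    (hmul : ∀ x y : Ω →ₘ[μ] ℂ, φ (x * y) = φ x * φ y)
    (hone : φ 1 = 1)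
    (hcont : ∀ (f : ℕ → Ω →ₘ[μ] ℂ) (g : Ω →ₘ[μ] ℂ),
      TendstoInMeasure μ (fun n => ⇑(f n)) atTop ⇑g →
      TendstoInMeasure μ (fun n => ⇑(φ (f n))) atTop ⇑(φ g)) :
    ∀ x : Ω →ₘ[μ] ℂ, eLpNorm (⇑x) ⊤ μ ≠ ⊤ →
      eLpNorm (⇑(φ x)) ⊤ μ ≠ ⊤ ∧ eLpNorm (⇑(φ x)) ⊤ μ = eLpNorm (⇑x) ⊤ μ := by
  intro x hx
  have hle := aux_norm_le φ hadd hmul hone hcont x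
  have hfin : eLpNorm (⇑(φ x)) ⊤ μ ≠ ⊤ := fun h => hx (top_le_iff.1 (le_trans (le_of_eq h.symm) hle))
  refine ⟨hfin, le_antisymm hle ?_⟩
  by_contra hcon
  push_neg at hcon
  -- hcon : eLpNorm (⇑(φ x)) ⊤ μ < eLpNorm (⇑x) ⊤ μ
  obtain ⟨q, hq0, hq1, hq2⟩ := ENNReal.lt_iff_exists_rat_btwn.1 hcon
  have hrfl : ((Real.toNNReal (q:ℝ)) : ℝ≥0∞) = ENNReal.ofReal (q:ℝ) := rfl
  rw [hrfl] at hq1 hq2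
  set c : ℝ := (q:ℝ) with hcdef
  have hc0 : 0 < c :=
    ENNReal.ofReal_pos.1 (lt_of_le_of_lt zero_le hq1)
  -- the set where ‖x‖ exceeds c has positive measure
  set A : Set Ω := {ω | c < ‖x ω‖} with hAdef
  have hAmeas : MeasurableSet A := measurableSet_lt measurable_const x.measurable.norm
  have hA : μ A ≠ 0 := by
    intro h0
    have hae : ∀ᵐ ω ∂μ, ‖x ω‖ ≤ c := by
      rw [ae_iff]
      convert h0 using 2
      ext ω
      simp [hAdef, not_le]
    have hb : eLpNorm (⇑x) ⊤ μ ≤ ENNReal.ofReal c := by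
      refine aux_eLpNorm_le (hae.mono fun ω h => ?_)
      rw [← enorm_eq_nnnorm, ← ofReal_norm]
      exact ENNReal.ofReal_le_ofReal h
    exact absurd hq2 (not_lt_of_ge hb)
  -- relative inverse of x on A
  set y0 : Ω → ℂ := fun ω => if c < ‖x ω‖ then (x ω)⁻¹ else 0 with hy0def
  have hy0meas : Measurable y0 := Measurable.ite hAmeas x.measurable.inv measurable_const
  set y : Ω →ₘ[μ] ℂ := AEEqFun.mk y0 hy0meas.aestronglyMeasurable with hydef
  set e0 : Ω → ℂ := A.indicator (fun _ => 1) with he0def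
  have he0meas : Measurable e0 := measurable_const.indicator hAmeas
  set e : Ω →ₘ[μ] ℂ := AEEqFun.mk e0 he0meas.aestronglyMeasurable with hedef
  have hxye : x * y = e := by
    refine AEEqFun.ext ?_
    filter_upwards [AEEqFun.coeFn_mul x y, AEEqFun.coeFn_mk y0 hy0meas.aestronglyMeasurable,
      AEEqFun.coeFn_mk e0 he0meas.aestronglyMeasurable] with ω h1 h2 h3
    rw [h1, h3, Pi.mul_apply, h2]
    by_cases hω : c < ‖x ω‖
    · have hx0 : x ω ≠ 0 := by
        intro h; rw [h, norm_zero] at hω; linarith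
      simp only [hy0def, he0def, hω, if_pos, mul_inv_cancel₀ hx0]
      rw [Set.indicator_of_mem (show ω ∈ A from hω)]
    · simp only [hy0def, he0def, hω, if_neg, mul_zero, not_false_iff]
      rw [Set.indicator_of_notMem (show ω ∉ A from hω)]
  have hee : e * e = e := by
    refine AEEqFun.ext ?_
    filter_upwards [AEEqFun.coeFn_mul e e,
      AEEqFun.coeFn_mk e0 he0meas.aestronglyMeasurable] with ω h1 h2
    rw [h1, Pi.mul_apply, h2]
    by_cases hω : ω ∈ A
    · simp [he0def, Set.indicator_of_mem hω]
    · simp [he0def, Set.indicator_of_notMem hω]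
  -- bound on y
  have hyb : eLpNorm (⇑y) ⊤ μ ≤ ENNReal.ofReal c⁻¹ := by
    refine aux_eLpNorm_le ?_
    filter_upwards [AEEqFun.coeFn_mk y0 hy0meas.aestronglyMeasurable] with ω h2
    rw [h2, ← enorm_eq_nnnorm, ← ofReal_norm]
    refine ENNReal.ofReal_le_ofReal ?_
    by_cases hω : c < ‖x ω‖
    · simp only [hy0def, hω, if_pos, norm_inv]
      exact inv_anti₀ hc0 (le_of_lt hω)
    · simp only [hy0def, hω, if_neg, not_false_iff, norm_zero]
      positivity
  have hφyb : eLpNorm (⇑(φ y)) ⊤ μ ≤ ENNReal.ofReal c⁻¹ :=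
    le_trans (aux_norm_le φ hadd hmul hone hcont y) hyb
  -- f = φ e is a nonzero idempotent, but has norm < 1 : contradiction
  set f : Ω →ₘ[μ] ℂ := φ e with hfdef
  have hf : f = φ x * φ y := by rw [hfdef, ← hmul, hxye]
  have hff : f * f = f := by rw [hfdef, ← hmul, hee]
  have hene : e ≠ 0 := by
    intro h0
    have h1 : ∀ᵐ ω ∂μ, e0 ω = 0 := by
      have h2 : ⇑e =ᵐ[μ] ⇑(0 : Ω →ₘ[μ] ℂ) := by rw [h0]
      filter_upwards [AEEqFun.coeFn_mk e0 he0meas.aestronglyMeasurable, h2,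
        AEEqFun.coeFn_zero (β := ℂ)] with ω ha hb hc
      rw [← ha, hb, hc]; rfl
    rw [ae_iff] at h1
    refine hA (measure_mono_null ?_ h1)
    intro ω hω
    simp only [Set.mem_setOf_eq, he0def]
    rw [Set.indicator_of_mem (show ω ∈ A from hω)]
    exact one_ne_zero
  -- derive f = 0 a.e.
  have hfae : ∀ᵐ ω ∂μ, f ω = 0 := by
    filter_upwards [AEEqFun.coeFn_mul f f, AEEqFun.coeFn_mul (φ x) (φ y),
      aux_ae_le_eLpNorm (μ := μ) (⇑(φ x)),
      aux_ae_le_eLpNorm (μ := μ) (⇑(φ y))] with ω h1 h2 hbx hby'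
    -- idempotent pointwise
    have hidem : f ω * f ω = f ω := by rw [← Pi.mul_apply (⇑f) (⇑f), ← h1, hff]
    have h5 : f ω * (f ω - 1) = 0 := by ring_nf; linear_combination hidem
    rcases mul_eq_zero.1 h5 with h6 | h6
    · exact h6
    · exfalso
      have h7 : f ω = 1 := sub_eq_zero.1 h6
      -- norms
      have hbx' : ‖(φ x) ω‖ < c := by
        have : ENNReal.ofReal ‖(φ x) ω‖ < ENNReal.ofReal c := by
          rw [ofReal_norm]
          exact lt_of_le_of_lt hbx hq1
        exact (ENNReal.ofReal_lt_ofReal_iff hc0).1 this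
      have hby2 : ‖(φ y) ω‖ ≤ c⁻¹ := by
        have : ENNReal.ofReal ‖(φ y) ω‖ ≤ ENNReal.ofReal c⁻¹ := by
          rw [ofReal_norm]
          exact le_trans hby' hφyb
        exact (ENNReal.ofReal_le_ofReal_iff (le_of_lt (inv_pos.2 hc0))).1 this
      have hfω : f ω = (φ x) ω * (φ y) ω := by
        rw [hf, h2]; rfl
      have h8 : ‖f ω‖ < 1 := by
        rw [hfω, norm_mul]
        rcases eq_or_lt_of_le (norm_nonneg ((φ y) ω)) with hz | hz
        · rw [← hz, mul_zero]; norm_num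
        · calc ‖(φ x) ω‖ * ‖(φ y) ω‖ < c * ‖(φ y) ω‖ :=
                mul_lt_mul_of_pos_right hbx' hz
            _ ≤ c * c⁻¹ := mul_le_mul_of_nonneg_left hby2 (le_of_lt hc0)
            _ = 1 := mul_inv_cancel₀ (ne_of_gt hc0)
      rw [h7, norm_one] at h8
      exact lt_irrefl _ h8
  have hfzero : f = 0 := by
    refine AEEqFun.ext ?_
    filter_upwards [hfae, AEEqFun.coeFn_zero (β := ℂ)] with ω h1 h2
    rw [h1, h2]; rfl
  refine hene (φ.injective ?_)
  rw [← hfdef, hfzero, aux_zero φ hadd]
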